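/- Fix an integer N ≥ 1 and a confidence probability β ∈ (0,1). For ω ∈ Ω^N let τ*(ω) = max_{1 ≤ i ≤ N} sol(ωᵢ) (the optimal value of the scenario program min τ subject to sol(ωᵢ) ≤ τ for all i). Then μ^N{ ω ∈ Ω^N : μ{ u ∈ Ω : sol(u) ≤ τ*(ω) } ≥ (1−β)^{1/N} } ≥ β. (Lemma 1: with confidence at least β, a fresh sample u satisfies sol(u) ≤ τ* with probability at least (1−β)^{1/N}.) -/

import Mathlib

open MeasureTheory

lemma scenario_key {Ω : Type*} [MeasurableSpace Ω] (μ : Measure Ω) [IsProbabilityMeasure μ]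
    (sol : Ω → ℝ) (ε : ℝ) (hε : 0 < ε) :
    μ {u | (μ {v | sol v ≤ sol u}).toReal < ε} ≤ ENNReal.ofReal ε := by
  set g : ℝ → ℝ := fun t => (μ {v | sol v ≤ t}).toReal with hg
  have hmono : Monotone g := fun s t hst =>
    ENNReal.toReal_mono (measure_ne_top μ _)
      (measure_mono (fun v hv => le_trans hv hst))
  have hle : ∀ t : ℝ, g t < ε → μ {v | sol v ≤ t} ≤ ENNReal.ofReal ε := fun t ht =>
    (ENNReal.le_ofReal_iff_toReal_le (measure_ne_top μ _) hε.le).2 ht.le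
  set S : Set ℝ := {t | g t < ε} with hS
  have hlower : ∀ s t : ℝ, t ≤ s → s ∈ S → t ∈ S := fun s t hts hs =>
    lt_of_le_of_lt (hmono hts) hs
  have hA : {u | (μ {v | sol v ≤ sol u}).toReal < ε} = sol ⁻¹' S := rfl
  rw [hA]
  rcases Set.eq_empty_or_nonempty S with hemp | hne
  · simp [hemp]
  by_cases hbdd : BddAbove S
  · set t0 : ℝ := sSup S with ht0
    have hmemle : ∀ t ∈ S, t ≤ t0 := fun t ht => le_csSup hbdd ht
    have hltmem : ∀ t : ℝ, t < t0 → t ∈ S := by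
      intro t ht
      obtain ⟨s, hsS, hst⟩ := exists_lt_of_lt_csSup hne ht
      exact hlower s t hst.le hsS
    by_cases ht0S : t0 ∈ S
    · have hsub : sol ⁻¹' S ⊆ {v | sol v ≤ t0} := fun u hu => hmemle _ hu
      exact le_trans (measure_mono hsub) (hle t0 ht0S)
    · have hsub : sol ⁻¹' S ⊆ {v | sol v < t0} := by
        intro u hu
        rcases lt_or_eq_of_le (hmemle _ hu) with h | h
        · exact h
        · exact absurd (h ▸ hu) ht0S
      have hunion : {v : Ω | sol v < t0} = ⋃ n : ℕ, {v | sol v ≤ t0 - 1 / (n + 1)} := by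
        ext v
        simp only [Set.mem_setOf_eq, Set.mem_iUnion]
        constructor
        · intro hv
          obtain ⟨n, hn⟩ := exists_nat_one_div_lt (sub_pos.2 hv)
          exact ⟨n, by linarith⟩
        · rintro ⟨n, hn⟩
          have : (0:ℝ) < 1 / (n + 1) := by positivity
          linarith
      have hdir : Directed (· ⊆ ·) (fun n : ℕ => {v : Ω | sol v ≤ t0 - 1 / (n + 1)}) := by
        apply Monotone.directed_le
        intro m n hmn v hv
        have h1 : (1:ℝ) / (n + 1) ≤ 1 / (m + 1) := by
          apply one_div_le_one_div_of_le (by positivity)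
          exact_mod_cast add_le_add_left (Nat.cast_le.2 hmn) 1
        simp only [Set.mem_setOf_eq] at hv ⊢
        linarith
      calc μ (sol ⁻¹' S) ≤ μ {v | sol v < t0} := measure_mono hsub
        _ = ⨆ n : ℕ, μ {v | sol v ≤ t0 - 1 / (n + 1)} := by
            rw [hunion, hdir.measure_iUnion]
        _ ≤ ENNReal.ofReal ε := by
            apply iSup_le
            intro n
            apply hle
            apply hltmem
            have : (0:ℝ) < 1 / ((n:ℝ) + 1) := by positivity
            linarith
  · -- S unbounded above: every t ∈ S, so μ univ ≤ ofReal ε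
    have hall : ∀ t : ℝ, t ∈ S := by
      intro t
      obtain ⟨s, hsS, hts⟩ := not_bddAbove_iff.1 hbdd t
      exact hlower s t hts.le hsS
    have huniv : (Set.univ : Set Ω) = ⋃ n : ℕ, {v | sol v ≤ n} := by
      ext v
      simp only [Set.mem_univ, Set.mem_iUnion, true_iff]
      obtain ⟨n, hn⟩ := exists_nat_ge (sol v)
      exact ⟨n, hn⟩
    have hdir : Directed (· ⊆ ·) (fun n : ℕ => {v : Ω | sol v ≤ n}) := by
      apply Monotone.directed_le
      intro m n hmn v hv
      simp only [Set.mem_setOf_eq] at hv ⊢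
      exact le_trans hv (Nat.cast_le.2 hmn)
    have h1 : (1 : ENNReal) ≤ ENNReal.ofReal ε := by
      have : μ (Set.univ : Set Ω) ≤ ENNReal.ofReal ε := by
        rw [huniv, hdir.measure_iUnion]
        exact iSup_le fun n => hle _ (hall _)
      simpa using this
    exact le_trans (le_trans (measure_mono (Set.subset_univ _)) (by simp)) h1

/-- **Lemma 1.** With confidence at least `β`, a fresh sample `u` satisfies
`sol u ≤ τ*` with probability at least `(1-β)^(1/N)`, where
`τ*(ω) = max_{1 ≤ i ≤ N} sol (ωᵢ)` is the optimal value of the scenario program. -/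
theorem scenario_opt_bound
    {Ω : Type*} [MeasurableSpace Ω] (μ : Measure Ω) [IsProbabilityMeasure μ]
    (sol : Ω → ℝ) (hsol : Measurable sol)
    (N : ℕ) (hN : 1 ≤ N) (β : ℝ) (hβ : β ∈ Set.Ioo (0 : ℝ) 1) :
    ENNReal.ofReal β ≤
      (Measure.pi (fun _ : Fin N => μ))
        {ω : Fin N → Ω |
          (1 - β) ^ ((1 : ℝ) / N) ≤
            (μ {u : Ω | sol u ≤
              Finset.univ.sup' (Finset.univ_nonempty_iff.mpr ⟨⟨0, hN⟩⟩)
                (fun i : Fin N => sol (ω i))}).toReal} := by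
  obtain ⟨hβ0, hβ1⟩ := hβ
  set ε : ℝ := (1 - β) ^ ((1 : ℝ) / N) with hεdef
  have h1β : (0:ℝ) < 1 - β := by linarith
  have hε : 0 < ε := Real.rpow_pos_of_pos h1β _
  have hεN : ε ^ N = 1 - β := by
    rw [hεdef, ← Real.rpow_natCast (_ ^ _) N, ← Real.rpow_mul h1β.le]
    have hNne : (N:ℝ) ≠ 0 := Nat.cast_ne_zero.2 (by omega)
    rw [one_div, inv_mul_cancel₀ hNne, Real.rpow_one]
  set E : Set (Fin N → Ω) := {ω : Fin N → Ω |
          ε ≤ (μ {u : Ω | sol u ≤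
              Finset.univ.sup' (Finset.univ_nonempty_iff.mpr ⟨⟨0, hN⟩⟩)
                (fun i : Fin N => sol (ω i))}).toReal} with hE
  set A : Set Ω := {u | (μ {v | sol v ≤ sol u}).toReal < ε} with hA
  have hcompl : Eᶜ ⊆ Set.pi Set.univ (fun _ : Fin N => A) := by
    intro ω hω i _
    simp only [hE, Set.mem_compl_iff, Set.mem_setOf_eq, not_le] at hω
    have hi : sol (ω i) ≤ Finset.univ.sup' (Finset.univ_nonempty_iff.mpr ⟨⟨0, hN⟩⟩)
        (fun i : Fin N => sol (ω i)) :=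
      Finset.le_sup' (fun i : Fin N => sol (ω i)) (Finset.mem_univ i)
    have hsub : {v | sol v ≤ sol (ω i)} ⊆ {u | sol u ≤ _} := fun v hv => le_trans hv hi
    exact lt_of_le_of_lt (ENNReal.toReal_mono (measure_ne_top μ _) (measure_mono hsub)) hω
  have hμA : μ A ≤ ENNReal.ofReal ε := scenario_key μ sol ε hε
  have hEc : (Measure.pi (fun _ : Fin N => μ)) Eᶜ ≤ ENNReal.ofReal (1 - β) := by
    calc (Measure.pi fun _ => μ) Eᶜ ≤ (Measure.pi fun _ => μ) (Set.pi Set.univ fun _ => A) :=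
          measure_mono hcompl
      _ = ∏ _i : Fin N, μ A := Measure.pi_pi _ _
      _ ≤ ∏ _i : Fin N, ENNReal.ofReal ε := Finset.prod_le_prod' (fun _ _ => hμA)
      _ = ENNReal.ofReal ε ^ N := by simp [Finset.prod_const]
      _ = ENNReal.ofReal (1 - β) := by rw [← ENNReal.ofReal_pow hε.le, hεN]
  have hone : (1 : ENNReal) ≤ (Measure.pi fun _ : Fin N => μ) E +
      (Measure.pi fun _ : Fin N => μ) Eᶜ := by
    have := measure_union_le (μ := Measure.pi fun _ : Fin N => μ) E Eᶜ
    simpa [Set.union_compl_self] using this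
  have key : ENNReal.ofReal β + ENNReal.ofReal (1 - β) ≤
      (Measure.pi fun _ : Fin N => μ) E + ENNReal.ofReal (1 - β) := by
    calc ENNReal.ofReal β + ENNReal.ofReal (1 - β) = ENNReal.ofReal 1 := by
          rw [← ENNReal.ofReal_add hβ0.le h1β.le]; norm_num
      _ = 1 := by simp
      _ ≤ _ + _ := hone
      _ ≤ _ + ENNReal.ofReal (1 - β) := add_le_add_right hEc _
  exact (ENNReal.add_le_add_iff_right ENNReal.ofReal_ne_top).1 key
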